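/- Let (a_n)_{n∈ℕ} be a sequence of non-negative real numbers and let 0 < β < γ be real numbers such that ∫_1^∞ sup{a_n : n ∈ ℕ, β·t < n < γ·t} dt < ∞ (with the convention that the supremum over the empty set is 0). Then for every pair of real numbers 0 < μ < ν, one has ∫_1^∞ sup{a_n : n ∈ ℕ, μ·t < n < ν·t} dt < ∞. -/

import Mathlib

open MeasureTheory Set
open scoped ENNReal

noncomputable def winB (a : ℕ → ℝ) (β γ t : ℝ) : ℝ≥0∞ :=
  ⨆ n ∈ {n : ℕ | β * t < (n : ℝ) ∧ (n : ℝ) < γ * t}, ENNReal.ofReal (a n)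

lemma win_finite (β γ t : ℝ) : {n : ℕ | β * t < (n : ℝ) ∧ (n : ℝ) < γ * t}.Finite := by
  apply (Set.finite_Iio (⌈γ * t⌉₊)).subset
  intro n hn
  exact Set.mem_Iio.2 (Nat.lt_ceil.2 hn.2)

lemma ofReal_win (a : ℕ → ℝ) (ha : ∀ n, 0 ≤ a n) (β γ t : ℝ) :
    ENNReal.ofReal (⨆ n ∈ {n : ℕ | β * t < (n : ℝ) ∧ (n : ℝ) < γ * t}, a n)
      = winB a β γ t := by
  set S := {n : ℕ | β * t < (n : ℝ) ∧ (n : ℝ) < γ * t} with hS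
  rcases S.eq_empty_or_nonempty with h | h
  · simp [winB, ← hS, h]
  · obtain ⟨n₀, hn₀, hmax⟩ := Set.exists_max_image S a (win_finite β γ t) h
    have hb : BddAbove (Set.range fun n => ⨆ _ : n ∈ S, a n) := by
      apply ((win_finite β γ t).image a).insert 0 |>.bddAbove.mono
      rintro x ⟨n, rfl⟩
      by_cases hn : n ∈ S
      · simp only [hn, ciSup_pos]
        exact Set.mem_insert_of_mem _ ⟨n, hn, rfl⟩
      · simp [hn]
    have h1 : (⨆ n ∈ S, a n) = a n₀ := by
      apply le_antisymm
      · refine ciSup_le fun n => ?_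
        by_cases hn : n ∈ S
        · simp only [hn, ciSup_pos]; exact hmax n hn
        · simp only [hn]
          simpa using (ha n₀)
      · refine le_trans ?_ (le_ciSup hb n₀)
        simp [hn₀]
    have h2 : winB a β γ t = ENNReal.ofReal (a n₀) := by
      apply le_antisymm
      · exact iSup₂_le fun n hn => ENNReal.ofReal_le_ofReal (hmax n hn)
      · exact le_iSup₂ (f := fun n _ => ENNReal.ofReal (a n)) n₀ hn₀
    rw [h1, h2]

lemma winB_measurable (a : ℕ → ℝ) (β γ : ℝ) : Measurable (fun t => winB a β γ t) := by
  apply Measurable.iSup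
  intro n
  have : (fun t => ⨆ _ : n ∈ {n : ℕ | β * t < (n : ℝ) ∧ (n : ℝ) < γ * t}, ENNReal.ofReal (a n))
      = Set.indicator {t : ℝ | β * t < (n : ℝ) ∧ (n : ℝ) < γ * t} (fun _ => ENNReal.ofReal (a n)) := by
    funext t
    by_cases h : β * t < (n : ℝ) ∧ (n : ℝ) < γ * t
    · simp [h, Set.indicator_of_mem, Set.mem_setOf_eq]
    · simp [h, Set.indicator_of_notMem, Set.mem_setOf_eq]
  rw [this]
  apply Measurable.indicator measurable_const
  exact (measurableSet_lt (measurable_const_mul β) measurable_const).inter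
    (measurableSet_lt measurable_const (measurable_const_mul γ))

lemma cover (β γ μ ν : ℝ) (hβ : 0 < β) (hβγ : β < γ) (hμ : 0 < μ) (hμν : μ < ν) :
    ∃ J : ℕ, ∃ c : ℕ → ℝ, (∀ j, 0 < c j) ∧
      ∀ t : ℝ, 0 < t → ∀ n : ℕ, μ * t < n → (n : ℝ) < ν * t →
        ∃ j ≤ J, β * (c j * t) < n ∧ (n : ℝ) < γ * (c j * t) := by
  classical
  set ρ : ℝ := (1 + γ / β) / 2 with hρ
  have hβγ' : 1 < γ / β := (one_lt_div hβ).2 hβγ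
  have hρ1 : 1 < ρ := by rw [hρ]; linarith
  have hρ2 : ρ < γ / β := by rw [hρ]; linarith
  obtain ⟨J, hJ⟩ := pow_unbounded_of_one_lt (ν / μ) hρ1
  refine ⟨J, fun j => (μ / β) * ρ ^ j, fun j => by positivity, ?_⟩
  intro t ht n hn1 hn2
  set P : ℕ → Prop := fun j => μ * ρ ^ j * t < n with hPdef
  have hP0 : P 0 := by simpa [hPdef] using hn1
  have hνμ : ν < μ * ρ ^ J := by
    rw [div_lt_iff₀ hμ] at hJ; linarith
  have hPJ : ¬ P J := by
    rw [hPdef]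
    push_neg
    nlinarith
  refine ⟨Nat.findGreatest P J, Nat.findGreatest_le J, ?_⟩
  have hj : P (Nat.findGreatest P J) := Nat.findGreatest_spec (Nat.zero_le J) hP0
  have hjJ : Nat.findGreatest P J < J :=
    lt_of_le_of_ne (Nat.findGreatest_le J) (fun h => hPJ (h ▸ hj))
  have hj1 : ¬ P (Nat.findGreatest P J + 1) :=
    Nat.findGreatest_is_greatest (Nat.lt_succ_self _) hjJ
  set j := Nat.findGreatest P J
  simp only [hPdef] at hj hj1
  push_neg at hj1
  have hρj : (0:ℝ) < ρ ^ j := by positivity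
  constructor
  · have he : β * ((μ / β) * ρ ^ j * t) = μ * ρ ^ j * t := by
      field_simp
    rw [he]; exact hj
  · have he : γ * ((μ / β) * ρ ^ j * t) = (γ / β) * ρ ^ j * (μ * t) := by
      field_simp
    rw [he]
    have h3 : ρ * (μ * ρ ^ j * t) < (γ / β) * (μ * ρ ^ j * t) :=
      mul_lt_mul_of_pos_right hρ2 (by positivity)
    have h1 : (n : ℝ) ≤ μ * ρ ^ (j + 1) * t := hj1
    rw [pow_succ] at h1
    nlinarith [h1, h3]

lemma scaled_finite (a : ℕ → ℝ) (β γ : ℝ) (hγ : 0 < γ)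
    (hint : ∫⁻ t in Set.Ici (1 : ℝ), winB a β γ t < ⊤) (c : ℝ) (hc : 0 < c) :
    ∫⁻ t in Set.Ici (1 : ℝ), winB a β γ (c * t) < ⊤ := by
  have hmeas := winB_measurable a β γ
  have hmap : Measure.map (fun t => c * t) (volume.restrict (Set.Ici (1 : ℝ)))
      = ENNReal.ofReal c⁻¹ • volume.restrict (Set.Ici c) := by
    have h1 : (fun t : ℝ => c * t) ⁻¹' Set.Ici c = Set.Ici (1 : ℝ) := by
      ext t
      simp only [Set.mem_preimage, Set.mem_Ici]
      constructor
      · intro h; nlinarith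
      · intro h; nlinarith
    rw [← h1, ← Measure.restrict_map (measurable_const_mul _) measurableSet_Ici,
      Real.map_volume_mul_left (ne_of_gt hc), Measure.restrict_smul,
      abs_of_pos (inv_pos.2 hc)]
  have hcv : ∫⁻ t in Set.Ici (1 : ℝ), winB a β γ (c * t)
      = ENNReal.ofReal c⁻¹ * ∫⁻ s in Set.Ici c, winB a β γ s := by
    rw [← lintegral_map hmeas (measurable_const_mul _), hmap, lintegral_smul_measure, smul_eq_mul]
  rw [hcv]
  refine ENNReal.mul_lt_top ENNReal.ofReal_lt_top ?_
  have hsub : Set.Ici c ⊆ Set.Ico c 1 ∪ Set.Ici 1 := by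
    intro x hx
    rcases lt_or_ge x 1 with h | h
    · exact Or.inl ⟨hx, h⟩
    · exact Or.inr h
  refine lt_of_le_of_lt ((lintegral_mono_set hsub).trans (lintegral_union_le _ _ _)) ?_
  refine ENNReal.add_lt_top.2 ⟨?_, hint⟩
  set C : ℝ≥0∞ := ∑ n ∈ Finset.range (⌈γ⌉₊ + 1), ENNReal.ofReal (a n) with hC
  have hCtop : C < ⊤ := ENNReal.sum_lt_top.2 fun n _ => ENNReal.ofReal_lt_top
  have hbd : ∀ s ∈ Set.Ico c 1, winB a β γ s ≤ C := by
    intro s hs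
    refine iSup₂_le fun n hn => ?_
    have hns : (n : ℝ) < γ := lt_of_lt_of_le hn.2 (by nlinarith [hs.2])
    have hn' : n < ⌈γ⌉₊ + 1 := Nat.lt_succ_of_lt (Nat.lt_ceil.2 hns)
    rw [hC]
    exact Finset.single_le_sum (f := fun n => ENNReal.ofReal (a n))
      (fun i _ => zero_le) (Finset.mem_range.2 hn')
  calc ∫⁻ s in Set.Ico c 1, winB a β γ s ≤ ∫⁻ _ in Set.Ico c 1, C :=
        setLIntegral_mono measurable_const hbd
    _ = C * volume (Set.Ico c 1) := setLIntegral_const _ _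
    _ < ⊤ := ENNReal.mul_lt_top hCtop (by simp [Real.volume_Ico])

/-- If the tail integral `∫_1^∞ sup{a_n : β·t < n < γ·t} dt` is finite for
one pair `0 < β < γ`, then it is finite for every pair `0 < μ < ν`. The supremum over
the empty set is `0` (the real `iSup` convention, consistent with `a_n ≥ 0`). -/
theorem integral_sup_window_finite_of_finite
    (a : ℕ → ℝ) (ha : ∀ n, 0 ≤ a n) (β γ : ℝ) (hβ : 0 < β) (hβγ : β < γ)
    (hint : ∫⁻ t in Set.Ici (1 : ℝ),
        ENNReal.ofReal (⨆ n ∈ {n : ℕ | β * t < (n : ℝ) ∧ (n : ℝ) < γ * t}, a n) < ⊤) :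
    ∀ μ ν : ℝ, 0 < μ → μ < ν →
      ∫⁻ t in Set.Ici (1 : ℝ),
        ENNReal.ofReal (⨆ n ∈ {n : ℕ | μ * t < (n : ℝ) ∧ (n : ℝ) < ν * t}, a n) < ⊤ := by
  intro μ ν hμ hμν
  have hrw : ∀ β' γ' : ℝ, (∫⁻ t in Set.Ici (1 : ℝ),
      ENNReal.ofReal (⨆ n ∈ {n : ℕ | β' * t < (n : ℝ) ∧ (n : ℝ) < γ' * t}, a n))
      = ∫⁻ t in Set.Ici (1 : ℝ), winB a β' γ' t :=
    fun β' γ' => lintegral_congr fun t => ofReal_win a ha β' γ' t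
  rw [hrw] at hint ⊢
  obtain ⟨J, c, hc, hcov⟩ := cover β γ μ ν hβ hβγ hμ hμν
  have hpt : ∀ t ∈ Set.Ici (1 : ℝ),
      winB a μ ν t ≤ ∑ j ∈ Finset.range (J + 1), winB a β γ (c j * t) := by
    intro t ht
    refine iSup₂_le fun n hn => ?_
    obtain ⟨j, hjJ, h1, h2⟩ := hcov t (lt_of_lt_of_le one_pos ht) n hn.1 hn.2
    calc ENNReal.ofReal (a n) ≤ winB a β γ (c j * t) :=
          le_iSup₂ (f := fun n _ => ENNReal.ofReal (a n)) n ⟨h1, h2⟩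
      _ ≤ _ := Finset.single_le_sum (f := fun j => winB a β γ (c j * t)) (fun i _ => zero_le)
          (Finset.mem_range.2 (Nat.lt_succ_of_le hjJ))
  have hγ : 0 < γ := hβ.trans hβγ
  calc ∫⁻ t in Set.Ici (1 : ℝ), winB a μ ν t
      ≤ ∫⁻ t in Set.Ici (1 : ℝ), ∑ j ∈ Finset.range (J + 1), winB a β γ (c j * t) :=
        setLIntegral_mono (Finset.measurable_sum _ fun j _ =>
          (winB_measurable a β γ).comp (measurable_const_mul _)) hpt
    _ = ∑ j ∈ Finset.range (J + 1), ∫⁻ t in Set.Ici (1 : ℝ), winB a β γ (c j * t) :=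
        lintegral_finset_sum _ fun j _ =>
          (winB_measurable a β γ).comp (measurable_const_mul _)
    _ < ⊤ := ENNReal.sum_lt_top.2 fun j _ => scaled_finite a β γ hγ hint (c j) (hc j)
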